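/- Let λ ∈ ℝ \ {0} and let f : Ω → ℝ be a regular c_λ-convex function on a nonempty open convex set Ω ⊂ ℝ^d. Then the λ-gradient map ∇^{c_λ} f : Ω → ℝ^d, u ↦ ∇f(u)/(1 − λ ∇f(u)·u), is injective, its range Ω' = ∇^{c_λ} f(Ω) is an open subset of ℝ^d, and ∇^{c_λ} f is a smooth diffeomorphism from Ω onto Ω' (its inverse is smooth). -/

import Mathlib

open MeasureTheory Real
open scoped RealInnerProductSpace ENNReal BigOperators Topology

noncomputable section

/-- The negative logarithmic cost `-c_λ(u,v) = (1/λ)·log(1 + λ u·v)`, valued in `EReal`,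
with the convention `log t = -∞` for `t ≤ 0` (so that `(1/λ)·(-∞) = -∞` for `λ > 0` and
`= +∞` for `λ < 0`). -/
def negCost {d : ℕ} (lam : ℝ) (u v : EuclideanSpace ℝ (Fin d)) : EReal :=
  if 0 < 1 + lam * ⟪u, v⟫ then (((1 / lam) * Real.log (1 + lam * ⟪u, v⟫) : ℝ) : EReal)
  else if 0 < lam then ⊥ else ⊤

/-- The `c_λ`-conjugate `f^{c_λ}(v) = sup_{u ∈ Ω} { (1/λ)·log(1 + λ u·v) − f(u) }`. -/
def lamConj {d : ℕ} (lam : ℝ) (Ω : Set (EuclideanSpace ℝ (Fin d)))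
    (f : EuclideanSpace ℝ (Fin d) → ℝ) (v : EuclideanSpace ℝ (Fin d)) : EReal :=
  ⨆ u ∈ Ω, (negCost lam u v - ((f u : ℝ) : EReal))

/-- The `λ`-gradient (deformed Legendre transform) `∇^{c_λ} f(u) = ∇f(u)/(1 − λ ∇f(u)·u)`. -/
def lamGrad {d : ℕ} (lam : ℝ) (f : EuclideanSpace ℝ (Fin d) → ℝ)
    (u : EuclideanSpace ℝ (Fin d)) : EuclideanSpace ℝ (Fin d) :=
  (1 - lam * ⟪gradient f u, u⟫)⁻¹ • gradient f u

/-- A regular `c_λ`-convex function: `f` smooth on a nonempty open convex `Ω`, the Hessian of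
`F_λ = (1/λ)(e^{λ f} − 1)` strictly positive definite on `Ω`, and `1 − λ ∇f(u)·u > 0` on `Ω`. -/
def IsRegularCConvex {d : ℕ} (lam : ℝ) (Ω : Set (EuclideanSpace ℝ (Fin d)))
    (f : EuclideanSpace ℝ (Fin d) → ℝ) : Prop :=
  Ω.Nonempty ∧ IsOpen Ω ∧ Convex ℝ Ω ∧ ContDiffOn ℝ (⊤ : ℕ∞) f Ω ∧
    (∀ u ∈ Ω, ∀ w : EuclideanSpace ℝ (Fin d), w ≠ 0 →
      0 < ⟪fderiv ℝ (gradient fun z => (1 / lam) * (Real.exp (lam * f z) - 1)) u w, w⟫) ∧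
    ∀ u ∈ Ω, 0 < 1 - lam * ⟪gradient f u, u⟫

section AuxLemmas
variable {d : ℕ}
local notation "E" => EuclideanSpace ℝ (Fin d)

lemma inner_gradient_eq (g : E → ℝ) (u w : E) :
    ⟪gradient g u, w⟫ = fderiv ℝ g u w := by
  rw [gradient]; exact InnerProductSpace.toDual_symm_apply

lemma contDiffOn_gradient {g : E → ℝ} {Ω : Set E} (hg : ContDiffOn ℝ (⊤:ℕ∞) g Ω)
    (hΩ : IsOpen Ω) : ContDiffOn ℝ (⊤:ℕ∞) (gradient g) Ω := by
  have h1 : ContDiffOn ℝ (⊤:ℕ∞) (fun x => fderiv ℝ g x) Ω := hg.fderiv_of_isOpen hΩ (by norm_num)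
  have h2 : ContDiff ℝ (⊤:ℕ∞) ((InnerProductSpace.toDual ℝ E).symm) :=
    (InnerProductSpace.toDual ℝ E).symm.contDiff
  exact h2.comp_contDiffOn h1

lemma gradFlam_eq {lam : ℝ} (hlam : lam ≠ 0) {f : E → ℝ} {Ω : Set E}
    (hf : ContDiffOn ℝ (⊤:ℕ∞) f Ω) (hΩ : IsOpen Ω) {u : E} (hu : u ∈ Ω) :
    gradient (fun z => (1 / lam) * (Real.exp (lam * f z) - 1)) u
      = Real.exp (lam * f u) • gradient f u := by
  have hfd : HasFDerivAt f (fderiv ℝ f u) u :=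
    ((hf.contDiffAt (hΩ.mem_nhds hu)).differentiableAt (by norm_num)).hasFDerivAt
  have h2 : HasFDerivAt (fun z => Real.exp (lam * f z))
      (Real.exp (lam * f u) • (lam • fderiv ℝ f u)) u := (hfd.const_mul lam).exp
  have h3 : HasFDerivAt (fun z => (1 / lam) * (Real.exp (lam * f z) - 1))
      (Real.exp (lam * f u) • fderiv ℝ f u) u := by
    have := (h2.sub_const 1).const_mul (1 / lam)
    refine this.congr_fderiv ?_
    ext x
    simp only [ContinuousLinearMap.coe_smul', Pi.smul_apply, smul_eq_mul]
    field_simp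
  rw [gradient, h3.fderiv, _root_.map_smul, gradient]

lemma flam_smooth {lam : ℝ} {f : E → ℝ} {Ω : Set E} (hf : ContDiffOn ℝ (⊤:ℕ∞) f Ω) :
    ContDiffOn ℝ (⊤:ℕ∞) (fun z => (1 / lam) * (Real.exp (lam * f z) - 1)) Ω := by
  have h : ContDiffOn ℝ (⊤:ℕ∞) (fun z => Real.exp (lam * f z)) Ω :=
    Real.contDiff_exp.comp_contDiffOn (contDiffOn_const.mul hf)
  exact contDiffOn_const.mul (h.sub contDiffOn_const)

lemma lamGrad_eq_G {lam : ℝ} (hlam : lam ≠ 0) {f : E → ℝ} {Ω : Set E}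
    (hf : ContDiffOn ℝ (⊤:ℕ∞) f Ω) (hΩ : IsOpen Ω)
    (hden : ∀ u ∈ Ω, 0 < 1 - lam * ⟪gradient f u, u⟫) {z : E} (hz : z ∈ Ω) :
    lamGrad lam f z =
      (Real.exp (lam * f z)
        - lam * ⟪gradient (fun z => (1 / lam) * (Real.exp (lam * f z) - 1)) z, z⟫)⁻¹
        • gradient (fun z => (1 / lam) * (Real.exp (lam * f z) - 1)) z := by
  set i := ⟪gradient f z, z⟫ with hi
  rw [gradFlam_eq hlam hf hΩ hz, lamGrad, real_inner_smul_left, ← hi, smul_smul]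
  congr 1
  have hb : Real.exp (lam * f z) ≠ 0 := (Real.exp_pos _).ne'
  have hd : 1 - lam * i ≠ 0 := (hden z hz).ne'
  have hkey : Real.exp (lam * f z) - lam * (Real.exp (lam * f z) * i)
      = Real.exp (lam * f z) * (1 - lam * i) := by ring
  rw [hkey]
  field_simp

lemma lamGrad_smooth {lam : ℝ} {f : E → ℝ} {Ω : Set E}
    (hf : ContDiffOn ℝ (⊤:ℕ∞) f Ω) (hΩ : IsOpen Ω)
    (hden : ∀ u ∈ Ω, 0 < 1 - lam * ⟪gradient f u, u⟫) :
    ContDiffOn ℝ (⊤:ℕ∞) (lamGrad lam f) Ω := by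
  have hg : ContDiffOn ℝ (⊤:ℕ∞) (gradient f) Ω := contDiffOn_gradient hf hΩ
  have hinner : ContDiffOn ℝ (⊤:ℕ∞) (fun u => ⟪gradient f u, u⟫) Ω :=
    ContDiffOn.inner ℝ hg contDiffOn_id
  have h1 : ContDiffOn ℝ (⊤:ℕ∞) (fun u => (1 - lam * ⟪gradient f u, u⟫)⁻¹) Ω :=
    (contDiffOn_const.sub (contDiffOn_const.mul hinner)).inv
      (fun u hu => (hden u hu).ne')
  exact h1.smul hg

set_option maxHeartbeats 4000000 in
lemma fderiv_lamGrad_ker {lam : ℝ} (hlam : lam ≠ 0) {f : E → ℝ} {Ω : Set E}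
    (hΩ : IsOpen Ω) (hf : ContDiffOn ℝ (⊤:ℕ∞) f Ω)
    (hHess : ∀ u ∈ Ω, ∀ w : E, w ≠ 0 →
      0 < ⟪fderiv ℝ (gradient fun z => (1 / lam) * (Real.exp (lam * f z) - 1)) u w, w⟫)
    (hden : ∀ u ∈ Ω, 0 < 1 - lam * ⟪gradient f u, u⟫)
    {u : E} (hu : u ∈ Ω) :
    ∀ x : E, fderiv ℝ (lamGrad lam f) u x = 0 → x = 0 := by
  intro x hx0
  by_contra hxne
  set Fl : E → ℝ := fun z => (1 / lam) * (Real.exp (lam * f z) - 1) with hFldef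
  set G : E → E := gradient Fl with hGdef
  have hGsm : ContDiffOn ℝ (⊤:ℕ∞) G Ω := contDiffOn_gradient (flam_smooth hf) hΩ
  set γ : ℝ → E := fun s => u + s • x with hγdef
  have hγ : ∀ s, HasDerivAt γ x s := fun s => by
    simpa [hγdef] using ((hasDerivAt_id s).smul_const x).const_add u
  have hγ0 : γ 0 = u := by simp [hγdef]
  have hmem : ∀ᶠ s in 𝓝 (0:ℝ), γ s ∈ Ω := by
    have hc : ContinuousAt γ 0 := (hγ 0).continuousAt
    have := hc.preimage_mem_nhds (hΩ.mem_nhds (by rw [hγ0]; exact hu))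
    exact this
  set b0 : ℝ := Real.exp (lam * f u) with hb0def
  have hb0pos : 0 < b0 := Real.exp_pos _
  set H : E →L[ℝ] E := fderiv ℝ G u with hHdef
  have hGu : G u = b0 • gradient f u := gradFlam_eq hlam hf hΩ hu
  -- derivative of lamGrad ∘ γ via fderiv
  have hsm : ContDiffOn ℝ (⊤:ℕ∞) (lamGrad lam f) Ω := lamGrad_smooth hf hΩ hden
  have hdiff : DifferentiableAt ℝ (lamGrad lam f) u :=
    (hsm.contDiffAt (hΩ.mem_nhds hu)).differentiableAt (by norm_num)
  have hdf : HasFDerivAt (lamGrad lam f) (fderiv ℝ (lamGrad lam f) u) (γ 0) := by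
    rw [hγ0]; exact hdiff.hasFDerivAt
  have h1 : HasDerivAt (fun s => lamGrad lam f (γ s)) (fderiv ℝ (lamGrad lam f) u x) 0 :=
    hdf.comp_hasDerivAt 0 (hγ 0)
  -- derivative via the G representation
  set bfun : ℝ → ℝ := fun s => Real.exp (lam * f (γ s)) with hbfun
  set ifun : ℝ → ℝ := fun s => ⟪G (γ s), γ s⟫ with hifun
  set βfun : ℝ → ℝ := fun s => bfun s - lam * ifun s with hβfun
  set Tfun : ℝ → E := fun s => (βfun s)⁻¹ • G (γ s) with hTfun
  have heq : (fun s => lamGrad lam f (γ s)) =ᶠ[𝓝 (0:ℝ)] Tfun :=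
    hmem.mono (fun s hs => lamGrad_eq_G hlam hf hΩ hden hs)
  have hfd : HasFDerivAt f (fderiv ℝ f u) (γ 0) := by
    rw [hγ0]
    exact ((hf.contDiffAt (hΩ.mem_nhds hu)).differentiableAt (by norm_num)).hasFDerivAt
  have hfs : HasDerivAt (fun t => f (γ t)) (fderiv ℝ f u x) 0 := hfd.comp_hasDerivAt 0 (hγ 0)
  have hb : HasDerivAt bfun (b0 * (lam * fderiv ℝ f u x)) 0 := by
    have := (hfs.const_mul lam).exp
    simpa [hbfun, hγ0, hb0def] using this
  have hGdf : HasFDerivAt G H (γ 0) := by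
    rw [hγ0]
    exact ((hGsm.contDiffAt (hΩ.mem_nhds hu)).differentiableAt (by norm_num)).hasFDerivAt
  have hGc : HasDerivAt (fun t => G (γ t)) (H x) 0 := hGdf.comp_hasDerivAt 0 (hγ 0)
  have hi : HasDerivAt ifun (⟪G u, x⟫ + ⟪H x, u⟫) 0 := by
    have := hGc.inner ℝ (hγ 0)
    simpa [hifun, hγ0] using this
  set β' : ℝ := b0 * (lam * fderiv ℝ f u x) - lam * (⟪G u, x⟫ + ⟪H x, u⟫) with hβ'def
  have hβ : HasDerivAt βfun β' 0 := hb.sub (hi.const_mul lam)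
  have hβ0 : βfun 0 = b0 - lam * ⟪G u, u⟫ := by
    simp [hβfun, hbfun, hifun, hγ0, hb0def]
  have hβ0pos : 0 < βfun 0 := by
    rw [hβ0, hGu, real_inner_smul_left]
    have : b0 - lam * (b0 * ⟪gradient f u, u⟫) = b0 * (1 - lam * ⟪gradient f u, u⟫) := by ring
    rw [this]
    exact mul_pos hb0pos (hden u hu)
  have hβinv : HasDerivAt (fun s => (βfun s)⁻¹) (-β' / (βfun 0)^2) 0 := hβ.inv hβ0pos.ne'
  have hT : HasDerivAt Tfun ((βfun 0)⁻¹ • H x + (-β' / (βfun 0)^2) • G u) 0 := by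
    have := hβinv.smul hGc
    rw [hγ0] at this
    exact this
  have h2 : HasDerivAt (fun s => lamGrad lam f (γ s))
      ((βfun 0)⁻¹ • H x + (-β' / (βfun 0)^2) • G u) 0 :=
    hT.congr_of_eventuallyEq heq
  have huniq : fderiv ℝ (lamGrad lam f) u x
      = (βfun 0)⁻¹ • H x + (-β' / (βfun 0)^2) • G u := h1.unique h2
  rw [hx0] at huniq
  -- algebra
  set β0 : ℝ := βfun 0 with hβ0def'
  have hβ0ne : β0 ≠ 0 := hβ0pos.ne'
  have e1 : (β0:ℝ)⁻¹ • H x = (β' / β0 ^ 2) • G u := by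
    have := huniq.symm
    have h3 : (β0:ℝ)⁻¹ • H x = -((-β' / β0 ^ 2) • G u) := by
      rw [eq_neg_iff_add_eq_zero]
      exact this
    rw [h3, ← neg_smul, neg_div, neg_neg]
  have e2 : H x = (β' / β0) • G u := by
    have h3 : β0 • ((β0:ℝ)⁻¹ • H x) = β0 • ((β' / β0 ^ 2) • G u) := by rw [e1]
    rw [smul_smul, smul_smul, mul_inv_cancel₀ hβ0ne, one_smul] at h3
    have h4 : β0 * (β' / β0 ^ 2) = β' / β0 := by
      field_simp
    rw [h4] at h3
    exact h3
  have hGx : ⟪G u, x⟫ = b0 * fderiv ℝ f u x := by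
    rw [hGu, real_inner_smul_left, inner_gradient_eq]
  have hβ'e : β' = -lam * ⟪H x, u⟫ := by
    rw [hβ'def, hGx]; ring
  have e3 : ⟪H x, u⟫ = (β' / β0) * ⟪G u, u⟫ := by
    rw [e2, real_inner_smul_left]
  have e4 : ⟪H x, u⟫ * β0 = β' * ⟪G u, u⟫ := by
    rw [e3]
    field_simp
  have hp : ⟪H x, u⟫ = 0 := by
    have e4' : ⟪H x, u⟫ * (b0 - lam * ⟪G u, u⟫) = (-lam * ⟪H x, u⟫) * ⟪G u, u⟫ := by
      rw [← hβ0, ← hβ'e]; exact e4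
    have h5 : ⟪H x, u⟫ * b0 = 0 := by linear_combination e4'
    rcases mul_eq_zero.mp h5 with h | h
    · exact h
    · exact absurd h hb0pos.ne'
  have e5 : H x = 0 := by
    rw [e2, hβ'e, hp]
    simp
  have hfinal : (0:ℝ) < ⟪H x, x⟫ := hHess u hu x hxne
  rw [e5] at hfinal
  simp at hfinal

set_option maxHeartbeats 4000000 in
lemma lamGrad_injOn {lam : ℝ} (hlam : lam ≠ 0) {f : E → ℝ} {Ω : Set E}
    (hΩ : IsOpen Ω) (hconv : Convex ℝ Ω) (hf : ContDiffOn ℝ (⊤:ℕ∞) f Ω)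
    (hHess : ∀ u ∈ Ω, ∀ w : E, w ≠ 0 →
      0 < ⟪fderiv ℝ (gradient fun z => (1 / lam) * (Real.exp (lam * f z) - 1)) u w, w⟫)
    (hden : ∀ u ∈ Ω, 0 < 1 - lam * ⟪gradient f u, u⟫) :
    Set.InjOn (lamGrad lam f) Ω := by
  intro u1 h1 u2 h2 hveq
  by_contra hne
  set Fl : E → ℝ := fun z => (1 / lam) * (Real.exp (lam * f z) - 1) with hFl
  set G : E → E := gradient Fl with hGdef
  have hGsm : ContDiffOn ℝ (⊤:ℕ∞) G Ω := contDiffOn_gradient (flam_smooth hf) hΩ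
  set w : E := u2 - u1 with hwdef
  have hw0 : w ≠ 0 := sub_ne_zero.mpr (Ne.symm hne)
  set v : E := lamGrad lam f u1 with hvdef
  set γ : ℝ → E := fun s => u1 + s • w with hγdef
  have hγmem : ∀ s ∈ Set.Icc (0:ℝ) 1, γ s ∈ Ω := fun s hs =>
    hconv.add_smul_sub_mem h1 h2 hs
  have hγ : ∀ s, HasDerivAt γ w s := fun s => by
    simpa [hγdef] using ((hasDerivAt_id s).smul_const w).const_add u1
  have hγ0 : γ 0 = u1 := by simp [hγdef]
  have hγ1 : γ 1 = u2 := by simp [hγdef, hwdef]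
  set afun : ℝ → ℝ := fun s => 1 + lam * (⟪u1, v⟫ + s * ⟪w, v⟫) with hafun
  set bfun : ℝ → ℝ := fun s => Real.exp (lam * f (γ s)) with hbfun
  set cfun : ℝ → ℝ := fun s => ⟪w, G (γ s)⟫ with hcfun
  set Dfun : ℝ → ℝ := fun s => lam * ⟪w, v⟫ * bfun s - afun s * (lam * cfun s) with hDfun
  -- derivative of Dfun
  have hDs : ∀ s, γ s ∈ Ω →
      HasDerivAt Dfun (-(afun s * (lam * ⟪w, fderiv ℝ G (γ s) w⟫))) s := by
    intro s hs
    have hfd : HasFDerivAt f (fderiv ℝ f (γ s)) (γ s) :=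
      ((hf.contDiffAt (hΩ.mem_nhds hs)).differentiableAt (by norm_num)).hasFDerivAt
    have hfs : HasDerivAt (fun t => f (γ t)) (fderiv ℝ f (γ s) w) s :=
      hfd.comp_hasDerivAt s (hγ s)
    have hb : HasDerivAt bfun (bfun s * (lam * fderiv ℝ f (γ s) w)) s := by
      simpa [hbfun] using (hfs.const_mul lam).exp
    have hGdiff : DifferentiableAt ℝ G (γ s) :=
      (hGsm.contDiffAt (hΩ.mem_nhds hs)).differentiableAt (by norm_num)
    have hGc : HasDerivAt (fun t => G (γ t)) (fderiv ℝ G (γ s) w) s :=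
      hGdiff.hasFDerivAt.comp_hasDerivAt s (hγ s)
    have hc : HasDerivAt cfun ⟪w, fderiv ℝ G (γ s) w⟫ s := by
      simpa using (hasDerivAt_const s w).inner ℝ hGc
    have ha : HasDerivAt afun (lam * ⟪w, v⟫) s := by
      have h0 : HasDerivAt (fun t : ℝ => t * ⟪w, v⟫) ⟪w, v⟫ s := hasDerivAt_mul_const _
      simpa [hafun] using ((h0.const_add ⟪u1, v⟫).const_mul lam).const_add 1
    have hcs : cfun s = bfun s * fderiv ℝ f (γ s) w := by
      rw [hcfun]
      simp only [hGdef, hFl, gradFlam_eq hlam hf hΩ hs, real_inner_smul_right]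
      rw [real_inner_comm, inner_gradient_eq, hbfun]
    have h := (hb.const_mul (lam * ⟪w, v⟫)).sub (ha.mul (hc.const_mul lam))
    exact h.congr_deriv (by rw [hcs]; ring)
  -- endpoint values of afun
  have hd1 : (0:ℝ) < 1 - lam * ⟪gradient f u1, u1⟫ := hden u1 h1
  have hd2 : (0:ℝ) < 1 - lam * ⟪gradient f u2, u2⟫ := hden u2 h2
  have ha0 : afun 0 = (1 - lam * ⟪gradient f u1, u1⟫)⁻¹ := by
    have hj : ⟪u1, v⟫ = (1 - lam * ⟪gradient f u1, u1⟫)⁻¹ * ⟪gradient f u1, u1⟫ := by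
      rw [hvdef, lamGrad, real_inner_smul_right, real_inner_comm u1]
    have h0 : afun 0 = 1 + lam * (⟪u1, v⟫ + 0 * ⟪w, v⟫) := rfl
    rw [h0, hj]
    set x := ⟪gradient f u1, u1⟫ with hxdef
    have hx : 1 - lam * x ≠ 0 := hd1.ne'
    field_simp
    ring
  have ha1 : afun 1 = (1 - lam * ⟪gradient f u2, u2⟫)⁻¹ := by
    have hsum : ⟪u1, v⟫ + ⟪w, v⟫ = ⟪u2, v⟫ := by
      rw [hwdef, inner_sub_left]; ring
    have hv2 : v = lamGrad lam f u2 := hvdef.trans hveq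
    have hj : ⟪u2, v⟫ = (1 - lam * ⟪gradient f u2, u2⟫)⁻¹ * ⟪gradient f u2, u2⟫ := by
      rw [hv2, lamGrad, real_inner_smul_right, real_inner_comm u2]
    have h0 : afun 1 = 1 + lam * (⟪u1, v⟫ + 1 * ⟪w, v⟫) := rfl
    rw [h0, one_mul, hsum, hj]
    set x := ⟪gradient f u2, u2⟫ with hxdef
    have hx : 1 - lam * x ≠ 0 := hd2.ne'
    field_simp
    ring
  have ha0pos : 0 < afun 0 := by rw [ha0]; exact inv_pos.mpr hd1
  have ha1pos : 0 < afun 1 := by rw [ha1]; exact inv_pos.mpr hd2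
  have hapos : ∀ s ∈ Set.Icc (0:ℝ) 1, 0 < afun s := by
    intro s hs
    have he : afun s = (1 - s) * afun 0 + s * afun 1 := by
      simp only [hafun]; ring
    rw [he]
    rcases hs with ⟨hs0, hs1⟩
    rcases eq_or_lt_of_le hs0 with h | h
    · rw [← h]; norm_num; exact ha0pos
    · have t1 : 0 < s * afun 1 := mul_pos h ha1pos
      have t2 : 0 ≤ (1 - s) * afun 0 := mul_nonneg (by linarith) ha0pos.le
      linarith
  -- endpoint values of Dfun
  have hD0 : Dfun 0 = 0 := by
    have hc0 : cfun 0 = bfun 0 * ⟪w, gradient f u1⟫ := by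
      rw [hcfun]
      simp only [hγ0, hGdef, hFl, gradFlam_eq hlam hf hΩ h1, real_inner_smul_right, hbfun, hγ0]
    have hwv : ⟪w, v⟫ = (1 - lam * ⟪gradient f u1, u1⟫)⁻¹ * ⟪w, gradient f u1⟫ := by
      rw [hvdef, lamGrad, real_inner_smul_right]
    have hD : Dfun 0 = lam * ⟪w, v⟫ * bfun 0 - afun 0 * (lam * cfun 0) := rfl
    rw [hD, hc0, hwv, ha0]
    ring
  have hD1 : Dfun 1 = 0 := by
    have hc1 : cfun 1 = bfun 1 * ⟪w, gradient f u2⟫ := by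
      rw [hcfun]
      simp only [hγ1, hGdef, hFl, gradFlam_eq hlam hf hΩ h2, real_inner_smul_right, hbfun, hγ1]
    have hv2 : v = lamGrad lam f u2 := hvdef.trans hveq
    have hwv : ⟪w, v⟫ = (1 - lam * ⟪gradient f u2, u2⟫)⁻¹ * ⟪w, gradient f u2⟫ := by
      rw [hv2, lamGrad, real_inner_smul_right]
    have hD : Dfun 1 = lam * ⟪w, v⟫ * bfun 1 - afun 1 * (lam * cfun 1) := rfl
    rw [hD, hc1, hwv, ha1]
    ring
  -- continuity
  have hcont : ContinuousOn Dfun (Set.Icc (0:ℝ) 1) := fun s hs =>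
    ((hDs s (hγmem s hs)).continuousAt).continuousWithinAt
  have h01 : (0:ℝ) ∈ Set.Icc (0:ℝ) 1 := by norm_num
  have h11 : (1:ℝ) ∈ Set.Icc (0:ℝ) 1 := by norm_num
  rcases hlam.lt_or_gt with hneg | hpos
  · -- lam < 0 : deriv positive, strict mono, D0 < D1 contradiction
    have hmono : StrictMonoOn Dfun (Set.Icc (0:ℝ) 1) := by
      apply strictMonoOn_of_deriv_pos (convex_Icc 0 1) hcont
      intro x hx
      rw [interior_Icc] at hx
      have hxi : x ∈ Set.Icc (0:ℝ) 1 := ⟨le_of_lt hx.1, le_of_lt hx.2⟩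
      have hmem := hγmem x hxi
      rw [(hDs x hmem).deriv]
      have hHp : 0 < ⟪fderiv ℝ G (γ x) w, w⟫ := hHess (γ x) hmem w hw0
      rw [real_inner_comm] at hHp
      have he : -(afun x * (lam * ⟪w, fderiv ℝ G (γ x) w⟫))
          = afun x * (-lam * ⟪w, fderiv ℝ G (γ x) w⟫) := by ring
      rw [he]
      exact mul_pos (hapos x hxi) (mul_pos (neg_pos.mpr hneg) hHp)
    have := hmono h01 h11 zero_lt_one
    rw [hD0, hD1] at this
    exact lt_irrefl 0 this
  · have hanti : StrictAntiOn Dfun (Set.Icc (0:ℝ) 1) := by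
      apply strictAntiOn_of_deriv_neg (convex_Icc 0 1) hcont
      intro x hx
      rw [interior_Icc] at hx
      have hxi : x ∈ Set.Icc (0:ℝ) 1 := ⟨le_of_lt hx.1, le_of_lt hx.2⟩
      have hmem := hγmem x hxi
      rw [(hDs x hmem).deriv]
      have hHp : 0 < ⟪fderiv ℝ G (γ x) w, w⟫ := hHess (γ x) hmem w hw0
      rw [real_inner_comm] at hHp
      have ht : 0 < afun x * (lam * ⟪w, fderiv ℝ G (γ x) w⟫) :=
        mul_pos (hapos x hxi) (mul_pos hpos hHp)
      linarith
    have := hanti h01 h11 zero_lt_one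
    rw [hD0, hD1] at this
    exact lt_irrefl 0 this

end AuxLemmas

set_option maxHeartbeats 2000000 in
/-- For a regular `c_λ`-convex function `f` on `Ω`, the λ-gradient map
`∇^{c_λ} f` is injective on `Ω`, its range `Ω' = ∇^{c_λ} f(Ω)` is open, and `∇^{c_λ} f` is a
smooth diffeomorphism from `Ω` onto `Ω'` (with smooth inverse). -/
theorem lamGrad_diffeomorphism {d : ℕ} (lam : ℝ) (hlam : lam ≠ 0)
    (Ω : Set (EuclideanSpace ℝ (Fin d))) (f : EuclideanSpace ℝ (Fin d) → ℝ)
    (hreg : IsRegularCConvex lam Ω f) :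
    Set.InjOn (lamGrad lam f) Ω ∧
    IsOpen (lamGrad lam f '' Ω) ∧
    ContDiffOn ℝ (⊤ : ℕ∞) (lamGrad lam f) Ω ∧
    ∃ g : EuclideanSpace ℝ (Fin d) → EuclideanSpace ℝ (Fin d),
      ContDiffOn ℝ (⊤ : ℕ∞) g (lamGrad lam f '' Ω) ∧
      Set.MapsTo g (lamGrad lam f '' Ω) Ω ∧
      Set.InvOn g (lamGrad lam f) Ω (lamGrad lam f '' Ω) := by
  obtain ⟨hnonempty, hΩ, hconv, hf, hHess, hdenpos⟩ := hreg
  have hinj : Set.InjOn (lamGrad lam f) Ω := lamGrad_injOn hlam hΩ hconv hf hHess hdenpos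
  have hsm : ContDiffOn ℝ (⊤:ℕ∞) (lamGrad lam f) Ω := lamGrad_smooth hf hΩ hdenpos
  have key : ∀ u ∈ Ω, ∃ eL : EuclideanSpace ℝ (Fin d) ≃L[ℝ] EuclideanSpace ℝ (Fin d),
      (eL : EuclideanSpace ℝ (Fin d) →L[ℝ] EuclideanSpace ℝ (Fin d))
        = fderiv ℝ (lamGrad lam f) u := by
    intro u hu
    set L := fderiv ℝ (lamGrad lam f) u with hL
    have hLinj : Function.Injective L := by
      intro a b hab
      have h0 : L (a - b) = 0 := by rw [map_sub, hab, sub_self]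
      have := fderiv_lamGrad_ker hlam hΩ hf hHess hdenpos hu (a - b) h0
      exact sub_eq_zero.mp this
    have hLsurj : Function.Surjective (L : EuclideanSpace ℝ (Fin d) →ₗ[ℝ]
        EuclideanSpace ℝ (Fin d)) := LinearMap.injective_iff_surjective.mp hLinj
    exact ⟨LinearEquiv.toContinuousLinearEquiv
      (LinearEquiv.ofBijective (L : EuclideanSpace ℝ (Fin d) →ₗ[ℝ] EuclideanSpace ℝ (Fin d))
        ⟨hLinj, hLsurj⟩), by ext z; rfl⟩
  have strict : ∀ u (hu : u ∈ Ω), ∃ eL : EuclideanSpace ℝ (Fin d) ≃L[ℝ] EuclideanSpace ℝ (Fin d),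
      HasStrictFDerivAt (lamGrad lam f)
        (eL : EuclideanSpace ℝ (Fin d) →L[ℝ] EuclideanSpace ℝ (Fin d)) u := by
    intro u hu
    obtain ⟨eL, heL⟩ := key u hu
    have hcd : ContDiffAt ℝ (⊤:ℕ∞) (lamGrad lam f) u := hsm.contDiffAt (hΩ.mem_nhds hu)
    have hfd : HasFDerivAt (lamGrad lam f)
        (eL : EuclideanSpace ℝ (Fin d) →L[ℝ] EuclideanSpace ℝ (Fin d)) u := by
      rw [heL]; exact (hcd.differentiableAt (by norm_num)).hasFDerivAt
    exact ⟨eL, hcd.hasStrictFDerivAt' hfd (by norm_num)⟩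
  have hopen : IsOpen (lamGrad lam f '' Ω) := by
    rw [isOpen_iff_mem_nhds]
    rintro v ⟨u, hu, rfl⟩
    obtain ⟨eL, hst⟩ := strict u hu
    rw [← hst.map_nhds_eq_of_equiv]
    exact Filter.image_mem_map (hΩ.mem_nhds hu)
  refine ⟨hinj, hopen, hsm, Function.invFunOn (lamGrad lam f) Ω, ?_, ?_, ?_, ?_⟩
  · -- smoothness of the inverse
    intro v hv
    obtain ⟨u, hu, rfl⟩ := hv
    have hcd : ContDiffAt ℝ (⊤:ℕ∞) (lamGrad lam f) u := hsm.contDiffAt (hΩ.mem_nhds hu)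
    obtain ⟨eL, heL⟩ := key u hu
    have hfd : HasFDerivAt (lamGrad lam f)
        (eL : EuclideanSpace ℝ (Fin d) →L[ℝ] EuclideanSpace ℝ (Fin d)) u := by
      rw [heL]; exact (hcd.differentiableAt (by norm_num)).hasFDerivAt
    have hst : HasStrictFDerivAt (lamGrad lam f)
        (eL : EuclideanSpace ℝ (Fin d) →L[ℝ] EuclideanSpace ℝ (Fin d)) u :=
      hcd.hasStrictFDerivAt' hfd (by norm_num)
    set h := hst.localInverse (lamGrad lam f) eL u with hhdef
    have hhc : ContDiffAt ℝ (⊤:ℕ∞) h (lamGrad lam f u) :=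
      hcd.to_localInverse (f' := eL) hfd (by norm_num)
    have hleft : ∀ᶠ z in nhds u, h (lamGrad lam f z) = z := hst.eventually_left_inverse
    have hev : ∀ᶠ z in nhds u, z ∈ Ω ∧ h (lamGrad lam f z) = z :=
      Filter.Eventually.and (hΩ.mem_nhds hu) hleft
    obtain ⟨U, hUsub, hUo, hUu⟩ := eventually_nhds_iff.mp hev
    have heq2 : Function.invFunOn (lamGrad lam f) Ω =ᶠ[nhds (lamGrad lam f u)] h := by
      have himg : lamGrad lam f '' U ∈ nhds (lamGrad lam f u) := by
        rw [← hst.map_nhds_eq_of_equiv]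
        exact Filter.image_mem_map (hUo.mem_nhds hUu)
      refine Filter.eventually_of_mem himg ?_
      rintro y ⟨z, hz, rfl⟩
      have hzΩ : z ∈ Ω := (hUsub z hz).1
      have hzh : h (lamGrad lam f z) = z := (hUsub z hz).2
      have hgmem : Function.invFunOn (lamGrad lam f) Ω (lamGrad lam f z) ∈ Ω :=
        Function.invFunOn_mem ⟨z, hzΩ, rfl⟩
      have hgval : lamGrad lam f (Function.invFunOn (lamGrad lam f) Ω (lamGrad lam f z))
          = lamGrad lam f z := Function.invFunOn_eq ⟨z, hzΩ, rfl⟩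
      have := hinj hgmem hzΩ hgval
      rw [this, hzh]
    exact ((hhc.congr_of_eventuallyEq heq2).contDiffWithinAt)
  · -- MapsTo
    rintro v ⟨u, hu, rfl⟩
    exact Function.invFunOn_mem ⟨u, hu, rfl⟩
  · -- LeftInvOn
    exact hinj.leftInvOn_invFunOn
  · -- RightInvOn
    rintro v ⟨u, hu, rfl⟩
    exact Function.invFunOn_eq ⟨u, hu, rfl⟩
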